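/- Let x̄ ∈ F be a feasible point of (MPSC) and assume MPSC-WCR holds at x̄. Then MPSC-WSOCQ holds at x̄. -/

import Mathlib

open Set Filter Topology Metric

noncomputable section

namespace MPSC

abbrev Vec (n : ℕ) := EuclideanSpace ℝ (Fin n)

variable {n m p l : ℕ}



section Helpers
open InnerProductSpace
set_option maxHeartbeats 1000000

local notation "⟪" x ", " y "⟫" => @inner ℝ _ _ x y

lemma inner_gradient_eq {n : ℕ} (φ : Vec n → ℝ) (x y : Vec n) :
    ⟪gradient φ x, y⟫ = fderiv ℝ φ x y := toDual_symm_apply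

lemma mem_orthogonal_span_iff {n : ℕ} {S : Set (Vec n)} {v : Vec n} :
    v ∈ (Submodule.span ℝ S)ᗮ ↔ ∀ u ∈ S, ⟪u, v⟫ = 0 := by
  rw [Submodule.mem_orthogonal]
  constructor
  · exact fun h u hu => h u (Submodule.subset_span hu)
  · intro h u hu
    induction hu using Submodule.span_induction with
    | mem x hx => exact h x hx
    | zero => simp
    | add x y _ _ hx hy => simp [inner_add_left, hx, hy]
    | smul a x _ hx => simp [inner_smul_left, hx]

lemma gradient_continuous {n : ℕ} {φ : Vec n → ℝ} (hφ : ContDiff ℝ 2 φ) :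
    Continuous fun x => gradient φ x := by
  have : Continuous fun x => fderiv ℝ φ x := hφ.continuous_fderiv (by norm_num)
  exact (toDual ℝ (Vec n)).symm.continuous.comp this


lemma core {n : ℕ} {ι : Type} [Fintype ι] (c : ι → Vec n → ℝ)
    (hc : ∀ i, ContDiff ℝ 2 (c i)) (xb : Vec n) (hc0 : ∀ i, c i xb = 0)
    {ε : ℝ} (hε : 0 < ε)
    (hrank : ∀ x : Vec n, ‖x - xb‖ < ε →
      Module.finrank ℝ ↥(Submodule.span ℝ (range fun i => gradient (c i) x)) =
        Module.finrank ℝ ↥(Submodule.span ℝ (range fun i => gradient (c i) xb)))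
    (d : Vec n) (hd : ∀ i, fderiv ℝ (c i) xb d = 0)
    {ε' : ℝ} (hε' : 0 < ε') :
    ∃ δ > (0:ℝ), ∃ ζ ζ' : ℝ → Vec n,
      (∀ t ∈ Ico (0:ℝ) δ, HasDerivWithinAt ζ (ζ' t) (Ico (0:ℝ) δ) t) ∧
      (∀ t ∈ Ico (0:ℝ) δ, DifferentiableWithinAt ℝ ζ' (Ico (0:ℝ) δ) t) ∧
      ζ 0 = xb ∧ ζ' 0 = d ∧
      ∀ t ∈ Ico (0:ℝ) δ, (∀ i, c i (ζ t) = 0) ∧ ‖ζ t - xb‖ < ε' := by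
  classical
  set V : Vec n → ι → Vec n := fun x i => gradient (c i) x with hV
  obtain ⟨tS, htsub, htspan, htind⟩ := exists_linearIndependent ℝ (range (V xb))
  have htfin : tS.Finite := (finite_range (V xb)).subset htsub
  haveI : Fintype ↥tS := htfin.fintype
  choose f hf using fun v : tS => htsub v.2
  -- hf : ∀ v : tS, V xb (f v) = ↑v
  set W : Vec n → ↥tS → Vec n := fun x v => gradient (c (f v)) x with hW
  have hW0 : W xb = Subtype.val := funext fun v => hf v
  have hindxb : LinearIndependent ℝ (W xb) := hW0 ▸ htind
  have hWV : ∀ x, range (W x) ⊆ range (V x) := by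
    rintro x _ ⟨v, rfl⟩; exact ⟨f v, rfl⟩
  have hspan_xb : Submodule.span ℝ (range (W xb)) = Submodule.span ℝ (range (V xb)) := by
    rw [hW0, Subtype.range_coe, htspan]
  have hcard : Module.finrank ℝ ↥(Submodule.span ℝ (range (V xb))) = Fintype.card ↥tS := by
    rw [← hspan_xb, finrank_span_eq_card hindxb]
  -- independence persists near xb
  have hWcont : Continuous fun x => W x :=
    continuous_pi fun v => gradient_continuous (hc (f v))
  have hopen : IsOpen {x : Vec n | LinearIndependent ℝ (W x)} :=
    isOpen_setOf_linearIndependent.preimage hWcont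
  obtain ⟨ε₂, hε₂, hball⟩ := Metric.isOpen_iff.1 hopen xb hindxb
  have hball' : ∀ x : Vec n, ‖x - xb‖ < ε₂ → LinearIndependent ℝ (W x) := by
    intro x hx; exact hball (by rwa [mem_ball, dist_eq_norm])
  -- span equality near xb
  have hspan : ∀ x : Vec n, ‖x - xb‖ < min ε ε₂ →
      Submodule.span ℝ (range (W x)) = Submodule.span ℝ (range (V x)) := by
    intro x hx
    have h1 : ‖x - xb‖ < ε := lt_of_lt_of_le hx (min_le_left _ _)
    have h2 : ‖x - xb‖ < ε₂ := lt_of_lt_of_le hx (min_le_right _ _)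
    refine Submodule.eq_of_le_of_finrank_le (Submodule.span_mono (hWV x)) ?_
    rw [hrank x h1, hcard, finrank_span_eq_card (hball' x h2)]
  -- the kernel submodule
  set K : Submodule ℝ (Vec n) := (Submodule.span ℝ (range (W xb)))ᗮ with hK
  have hmemK : ∀ y : Vec n, y ∈ K ↔ ∀ v : ↥tS, fderiv ℝ (c (f v)) xb y = 0 := by
    intro y
    rw [hK, mem_orthogonal_span_iff]
    constructor
    · intro h v; rw [← inner_gradient_eq]; exact h _ ⟨v, rfl⟩
    · rintro h _ ⟨v, rfl⟩; rw [hW, inner_gradient_eq]; exact h v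
  have hdK : d ∈ K := (hmemK d).2 fun v => hd (f v)
  set D : Vec n →L[ℝ] (↥tS → ℝ) :=
    ContinuousLinearMap.pi (fun v => fderiv ℝ (c (f v)) xb) with hD
  set P := K.orthogonalProjectionOnto with hP
  set Φ' : Vec n →L[ℝ] ↥K × (↥tS → ℝ) := P.prod D with hΦ'
  have hinj : Function.Injective Φ' := by
    have hker : ∀ y : Vec n, Φ' y = 0 → y = 0 := by
      intro y hy
      have h1 : P y = 0 := congrArg Prod.fst hy
      have h2 : D y = 0 := congrArg Prod.snd hy
      have hyKo : y ∈ Kᗮ := Submodule.orthogonalProjectionOnto_eq_zero_iff.1 h1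
      have hyK : y ∈ K := (hmemK y).2 fun v => congrFun h2 v
      have := Submodule.inner_right_of_mem_orthogonal hyK hyKo
      rwa [inner_self_eq_zero] at this
    intro a b hab
    have : Φ' (a - b) = 0 := by rw [map_sub, hab, sub_self]
    exact sub_eq_zero.1 (hker _ this)
  -- finrank bookkeeping
  have hfrK : Module.finrank ℝ ↥(Submodule.span ℝ (range (W xb))) + Module.finrank ℝ ↥K = n := by
    have := Submodule.finrank_add_finrank_orthogonal (𝕜 := ℝ) (Submodule.span ℝ (range (W xb)))
    rwa [finrank_euclideanSpace_fin] at this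
  have hfr : Module.finrank ℝ (Vec n) = Module.finrank ℝ (↥K × (↥tS → ℝ)) := by
    rw [Module.finrank_prod, Module.finrank_pi, finrank_euclideanSpace_fin]
    have h1 : Module.finrank ℝ ↥(Submodule.span ℝ (range (W xb))) = Fintype.card ↥tS := by
      rw [hspan_xb]; exact hcard
    omega
  set eL : Vec n ≃L[ℝ] ↥K × (↥tS → ℝ) :=
    (LinearMap.linearEquivOfInjective Φ'.toLinearMap hinj hfr).toContinuousLinearEquiv with heL
  have hecoe : ∀ x, eL x = Φ' x := fun x => rfl
  set Φ : Vec n → ↥K × (↥tS → ℝ) := fun x => (P x, fun v => c (f v) x) with hΦ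
  have hΦe : HasFDerivAt Φ (eL : Vec n →L[ℝ] ↥K × (↥tS → ℝ)) xb := by
    have h2 : HasFDerivAt (fun x (v : ↥tS) => c (f v) x) D xb :=
      hasFDerivAt_pi.2 fun v => ((hc (f v)).differentiable (by norm_num)).differentiableAt.hasFDerivAt
    have : HasFDerivAt Φ Φ' xb := (P.hasFDerivAt).prodMk h2
    convert this using 1
    exact ContinuousLinearMap.ext hecoe
  have hΦcd : ContDiffAt ℝ 2 Φ xb :=
    ((P.contDiff).prodMk (contDiff_pi.2 fun v => hc (f v))).contDiffAt
  have h12 : (2 : WithTop ℕ∞) ≠ 0 := by norm_num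
  set Ψ := hΦcd.localInverse hΦe h12 with hΨ
  have hS : HasStrictFDerivAt Φ (eL : Vec n →L[ℝ] ↥K × (↥tS → ℝ)) xb :=
    hΦcd.hasStrictFDerivAt' hΦe h12
  have hΨdef : Ψ = hS.localInverse Φ eL xb := rfl
  have hΨ0 : Ψ (Φ xb) = xb := hΦcd.localInverse_apply_image hΦe h12
  have hrinv : ∀ᶠ y in 𝓝 (Φ xb), Φ (Ψ y) = y := by
    rw [hΨdef]; exact hS.eventually_right_inverse
  have hΨcd : ContDiffAt ℝ 2 Ψ (Φ xb) := hΦcd.to_localInverse hΦe h12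
  have hΨD : HasFDerivAt Ψ (eL.symm : ↥K × (↥tS → ℝ) →L[ℝ] Vec n) (Φ xb) := by
    rw [hΨdef]; exact hS.to_localInverse.hasFDerivAt
  set dK : ↥K := ⟨d, hdK⟩ with hdKdef
  set w : ℝ → ↥K × (↥tS → ℝ) := fun t => (P xb + t • dK, 0) with hw
  have hΦxb : Φ xb = (P xb, 0) := by
    rw [hΦ]; exact Prod.ext rfl (funext fun v => hc0 (f v))
  have hw0 : w 0 = Φ xb := by rw [hw, hΦxb]; simp
  set ζ : ℝ → Vec n := fun t => Ψ (w t) with hζ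
  have hwcd : ContDiff ℝ 2 w :=
    ((contDiff_const).add ((contDiff_id).smul contDiff_const)).prodMk contDiff_const
  have hζcd : ContDiffAt ℝ 2 ζ 0 := by
    have : ContDiffAt ℝ 2 Ψ (w 0) := hw0 ▸ hΨcd
    exact this.comp 0 hwcd.contDiffAt
  -- choose a neighborhood where everything works
  obtain ⟨u, hu_nhds, hucd⟩ := hζcd.contDiffOn (le_refl 2) (by norm_num)
  have hwt : Tendsto w (𝓝 0) (𝓝 (Φ xb)) := by
    rw [← hw0]; exact hwcd.continuous.continuousAt
  have hev1 : ∀ᶠ t in 𝓝 (0:ℝ), Φ (Ψ (w t)) = w t := hwt.eventually hrinv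
  have hζ0 : ζ 0 = xb := by rw [hζ]; simp only [hw0]; exact hΨ0
  have hζcont : ContinuousAt ζ 0 := hζcd.continuousAt
  have hev2 : ∀ᶠ t in 𝓝 (0:ℝ), ‖ζ t - xb‖ < min (min ε ε₂) ε' := by
    have hpos : 0 < min (min ε ε₂) ε' := lt_min (lt_min hε hε₂) hε'
    have : Tendsto (fun t => ‖ζ t - xb‖) (𝓝 0) (𝓝 ‖ζ 0 - xb‖) :=
      ((hζcont.tendsto).sub_const xb).norm
    rw [hζ0, sub_self, norm_zero] at this
    exact this.eventually_lt_const hpos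
  obtain ⟨δ, hδpos, hδball⟩ := Metric.eventually_nhds_iff_ball.1
    ((hev1.and hev2).and (eventually_mem_nhds_iff.mpr hu_nhds))
  set B := Metric.ball (0:ℝ) δ with hB
  have hBopen : IsOpen B := Metric.isOpen_ball
  have hB0 : (0:ℝ) ∈ B := Metric.mem_ball_self hδpos
  have hBrinv : ∀ t ∈ B, Φ (ζ t) = w t := fun t ht => ((hδball t ht).1).1
  have hBnorm : ∀ t ∈ B, ‖ζ t - xb‖ < min (min ε ε₂) ε' := fun t ht => ((hδball t ht).1).2
  have hBu : B ⊆ u := fun t ht => mem_of_mem_nhds (hδball t ht).2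
  have hζB : ContDiffOn ℝ 2 ζ B := hucd.mono hBu
  have hζdiff : ∀ t ∈ B, DifferentiableAt ℝ ζ t := fun t ht =>
    ((hζB.differentiableOn (by norm_num)) t ht).differentiableAt (hBopen.mem_nhds ht)
  set ζ' : ℝ → Vec n := deriv ζ with hζ'
  have hderiv : ∀ t ∈ B, HasDerivAt ζ (ζ' t) t := fun t ht => (hζdiff t ht).hasDerivAt
  have hζ'cd : ContDiffOn ℝ 1 ζ' B := hζB.deriv_of_isOpen hBopen (by norm_num)
  have hζ'diff : ∀ t ∈ B, DifferentiableAt ℝ ζ' t := fun t ht =>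
    ((hζ'cd.differentiableOn (by norm_num)) t ht).differentiableAt (hBopen.mem_nhds ht)
  -- ζ' 0 = d
  have hζ'0 : ζ' 0 = d := by
    have hwD : HasDerivAt w (dK, 0) 0 := by
      have h1 : HasDerivAt (fun t : ℝ => P xb + t • dK) dK 0 := by
        simpa using ((hasDerivAt_id (0:ℝ)).smul_const dK).const_add (P xb)
      exact h1.prodMk (hasDerivAt_const 0 0)
    have hΨD' : HasFDerivAt Ψ (eL.symm : ↥K × (↥tS → ℝ) →L[ℝ] Vec n) (w 0) := hw0 ▸ hΨD
    have hcomp : HasDerivAt ζ (eL.symm (dK, 0)) 0 := hΨD'.comp_hasDerivAt 0 hwD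
    have heLd : eL d = (dK, 0) := by
      rw [hecoe]
      refine Prod.ext ?_ ?_
      · show P d = dK
        exact Submodule.orthogonalProjectionOnto_mem_subspace_eq_self dK
      · show D d = 0
        exact funext fun v => hd (f v)
    have : eL.symm (dK, 0) = d := by rw [← heLd, ContinuousLinearEquiv.symm_apply_apply]
    rw [hζ', hcomp.deriv, this]
  -- values of the chosen constraints vanish on B
  have hκ0 : ∀ v : ↥tS, ∀ t ∈ B, c (f v) (ζ t) = 0 := by
    intro v t ht
    have := congrArg Prod.snd (hBrinv t ht)
    have h2 := congrFun this v
    simpa [hΦ, hw] using h2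
  -- ζ' t annihilates all constraint gradients along the curve
  have hperp : ∀ t ∈ B, ∀ i, fderiv ℝ (c i) (ζ t) (ζ' t) = 0 := by
    intro t ht i
    have hWzero : ∀ v : ↥tS, fderiv ℝ (c (f v)) (ζ t) (ζ' t) = 0 := by
      intro v
      have hψ : HasDerivAt (fun s => c (f v) (ζ s)) (fderiv ℝ (c (f v)) (ζ t) (ζ' t)) t :=
        (((hc (f v)).differentiable (by norm_num)).differentiableAt.hasFDerivAt).comp_hasDerivAt t
          (hderiv t ht)
      have hψ0 : HasDerivAt (fun s => c (f v) (ζ s)) 0 t := by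
        refine (hasDerivAt_const t (0:ℝ)).congr_of_eventuallyEq ?_
        filter_upwards [hBopen.mem_nhds ht] with s hs
        exact hκ0 v s hs
      exact hψ.unique hψ0
    have hmem : ζ' t ∈ (Submodule.span ℝ (range (W (ζ t))))ᗮ := by
      refine mem_orthogonal_span_iff.2 ?_
      rintro _ ⟨v, rfl⟩
      rw [hW, inner_gradient_eq]; exact hWzero v
    have hnear : ‖ζ t - xb‖ < min ε ε₂ := lt_of_lt_of_le (hBnorm t ht) (min_le_left _ _)
    rw [hspan (ζ t) hnear] at hmem
    have hgr : gradient (c i) (ζ t) ∈ Submodule.span ℝ (range (V (ζ t))) :=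
      Submodule.subset_span ⟨i, rfl⟩
    have := Submodule.inner_right_of_mem_orthogonal hgr hmem
    rwa [inner_gradient_eq] at this
  -- constancy of all constraints along the curve
  have hconst : ∀ t ∈ Ico (0:ℝ) δ, ∀ i, c i (ζ t) = 0 := by
    intro t ht i
    have hIB : Icc (0:ℝ) t ⊆ B := by
      intro s hs
      rw [hB, Real.ball_eq_Ioo]
      constructor <;> [skip; skip] <;> linarith [hs.1, hs.2, ht.2, hδpos]
    have hcont : ContinuousOn (fun s => c i (ζ s)) (Icc 0 t) := by
      apply Continuous.comp_continuousOn ((hc i).continuous)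
      exact (hζB.continuousOn).mono hIB
    have hder : ∀ s ∈ Ico (0:ℝ) t, HasDerivWithinAt (fun s => c i (ζ s)) 0 (Ici s) s := by
      intro s hs
      have hsB : s ∈ B := hIB ⟨hs.1, le_of_lt hs.2⟩
      have hψ : HasDerivAt (fun s => c i (ζ s)) (fderiv ℝ (c i) (ζ s) (ζ' s)) s :=
        (((hc i).differentiable (by norm_num)).differentiableAt.hasFDerivAt).comp_hasDerivAt s
          (hderiv s hsB)
      rw [hperp s hsB i] at hψ
      exact hψ.hasDerivWithinAt
    have := constant_of_has_deriv_right_zero hcont hder t (right_mem_Icc.2 ht.1)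
    rw [this, hζ0, hc0 i]
  -- assemble
  have hIcoB : Ico (0:ℝ) δ ⊆ B := by
    intro s hs
    rw [hB, Real.ball_eq_Ioo]
    exact ⟨by linarith [hs.1], by linarith [hs.2]⟩
  refine ⟨δ, hδpos, ζ, ζ', ?_, ?_, hζ0, hζ'0, ?_⟩
  · exact fun t ht => ((hderiv t (hIcoB ht))).hasDerivWithinAt
  · exact fun t ht => (hζ'diff t (hIcoB ht)).differentiableWithinAt
  · intro t ht
    refine ⟨hconst t ht, ?_⟩
    exact lt_of_lt_of_le (hBnorm t (hIcoB ht)) (min_le_right _ _)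


end Helpers

open scoped Classical in
/-- Sum of a function over an index set (finite ambient type). -/
noncomputable def sumOver {α β : Type*} [Fintype α] [AddCommMonoid β]
    (S : Set α) (v : α → β) : β :=
  ∑ a, if a ∈ S then v a else 0

/-- The feasible set of (MPSC). -/
def Feas (g : Fin m → Vec n → ℝ) (h : Fin p → Vec n → ℝ)
    (G H : Fin l → Vec n → ℝ) : Set (Vec n) :=
  {x | (∀ i, g i x ≤ 0) ∧ (∀ j, h j x = 0) ∧ ∀ k, G k x * H k x = 0}

/-- Index set of active inequality constraints. -/
def Ig (g : Fin m → Vec n → ℝ) (xb : Vec n) : Set (Fin m) := {i | g i xb = 0}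

def IG (G H : Fin l → Vec n → ℝ) (xb : Vec n) : Set (Fin l) :=
  {k | G k xb = 0 ∧ H k xb ≠ 0}

def IH (G H : Fin l → Vec n → ℝ) (xb : Vec n) : Set (Fin l) :=
  {k | G k xb ≠ 0 ∧ H k xb = 0}

def IGH (G H : Fin l → Vec n → ℝ) (xb : Vec n) : Set (Fin l) :=
  {k | G k xb = 0 ∧ H k xb = 0}

/-- (β1, β2) is a disjoint bipartition of I_GH. -/
def Partition (G H : Fin l → Vec n → ℝ) (xb : Vec n) (β1 β2 : Set (Fin l)) : Prop :=
  β1 ∩ β2 = ∅ ∧ β1 ∪ β2 = IGH G H xb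

/-- Branch feasible set. -/
def BranchFeas (g : Fin m → Vec n → ℝ) (h : Fin p → Vec n → ℝ)
    (G H : Fin l → Vec n → ℝ) (xb : Vec n) (β1 β2 : Set (Fin l)) : Set (Vec n) :=
  {x | (∀ i, g i x ≤ 0) ∧ (∀ j, h j x = 0) ∧
    (∀ k ∈ IG G H xb ∪ β1, G k x = 0) ∧ ∀ k ∈ IH G H xb ∪ β2, H k x = 0}

/-- Bouligand tangent cone, as defined in the paper. -/
def tangentCone (Ω : Set (Vec n)) (xb : Vec n) : Set (Vec n) :=
  {d | ∃ t : ℕ → ℝ, ∃ x : ℕ → Vec n, (∀ k, 0 ≤ t k) ∧ (∀ k, x k ∈ Ω) ∧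
    Tendsto x atTop (nhds xb) ∧ Tendsto (fun k => t k • (x k - xb)) atTop (nhds d)}

/-- MPSC linearization cone. -/
def LCone (g : Fin m → Vec n → ℝ) (h : Fin p → Vec n → ℝ)
    (G H : Fin l → Vec n → ℝ) (xb : Vec n) : Set (Vec n) :=
  {d | (∀ i ∈ Ig g xb, fderiv ℝ (g i) xb d ≤ 0) ∧ (∀ j, fderiv ℝ (h j) xb d = 0) ∧
    (∀ k ∈ IG G H xb, fderiv ℝ (G k) xb d = 0) ∧ (∀ k ∈ IH G H xb, fderiv ℝ (H k) xb d = 0) ∧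
    ∀ k ∈ IGH G H xb, fderiv ℝ (G k) xb d * fderiv ℝ (H k) xb d = 0}

/-- Branch linearization cone. -/
def BranchLCone (g : Fin m → Vec n → ℝ) (h : Fin p → Vec n → ℝ)
    (G H : Fin l → Vec n → ℝ) (xb : Vec n) (β1 β2 : Set (Fin l)) : Set (Vec n) :=
  {d | (∀ i ∈ Ig g xb, fderiv ℝ (g i) xb d ≤ 0) ∧ (∀ j, fderiv ℝ (h j) xb d = 0) ∧
    (∀ k ∈ IG G H xb ∪ β1, fderiv ℝ (G k) xb d = 0) ∧
    ∀ k ∈ IH G H xb ∪ β2, fderiv ℝ (H k) xb d = 0}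

/-- MPSC critical subspace. -/
def CritSubspace (g : Fin m → Vec n → ℝ) (h : Fin p → Vec n → ℝ)
    (G H : Fin l → Vec n → ℝ) (xb : Vec n) : Set (Vec n) :=
  {d | (∀ i ∈ Ig g xb, fderiv ℝ (g i) xb d = 0) ∧ (∀ j, fderiv ℝ (h j) xb d = 0) ∧
    (∀ k ∈ IG G H xb ∪ IGH G H xb, fderiv ℝ (G k) xb d = 0) ∧
    ∀ k ∈ IH G H xb ∪ IGH G H xb, fderiv ℝ (H k) xb d = 0}

/-- Rank (dimension of the span) of the family of gradients
{∇g_i(x)}_{i∈I1} ∪ {∇h_j(x)}_j ∪ {∇G_k(x)}_{k∈I3} ∪ {∇H_k(x)}_{k∈I4}. -/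
def gradRank (g : Fin m → Vec n → ℝ) (h : Fin p → Vec n → ℝ)
    (G H : Fin l → Vec n → ℝ) (I1 : Set (Fin m)) (I3 I4 : Set (Fin l)) (x : Vec n) : ℕ :=
  Module.finrank ℝ ↥(Submodule.span ℝ
    ((fun i => gradient (g i) x) '' I1 ∪ Set.range (fun j => gradient (h j) x) ∪
     (fun k => gradient (G k) x) '' I3 ∪ (fun k => gradient (H k) x) '' I4))

/-- MPSC-LICQ. -/
def LICQ (g : Fin m → Vec n → ℝ) (h : Fin p → Vec n → ℝ)
    (G H : Fin l → Vec n → ℝ) (xb : Vec n) : Prop :=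
  ∀ (lam : Fin m → ℝ) (ρ : Fin p → ℝ) (μ ν : Fin l → ℝ),
    (∀ i, i ∉ Ig g xb → lam i = 0) →
    (∀ k, k ∉ IG G H xb ∪ IGH G H xb → μ k = 0) →
    (∀ k, k ∉ IH G H xb ∪ IGH G H xb → ν k = 0) →
    ∑ i, lam i • gradient (g i) xb + ∑ j, ρ j • gradient (h j) xb +
      ∑ k, μ k • gradient (G k) xb + ∑ k, ν k • gradient (H k) xb = 0 →
    lam = 0 ∧ ρ = 0 ∧ μ = 0 ∧ ν = 0

/-- MPSC-RCRCQ. -/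
def RCRCQ (g : Fin m → Vec n → ℝ) (h : Fin p → Vec n → ℝ)
    (G H : Fin l → Vec n → ℝ) (xb : Vec n) : Prop :=
  ∃ ε > (0:ℝ), ∀ I1 : Set (Fin m), I1 ⊆ Ig g xb →
    ∀ I3 I4 : Set (Fin l), I3 ⊆ IGH G H xb → I4 ⊆ IGH G H xb →
      ∀ x : Vec n, ‖x - xb‖ < ε →
        gradRank g h G H I1 (I3 ∪ IG G H xb) (I4 ∪ IH G H xb) x =
        gradRank g h G H I1 (I3 ∪ IG G H xb) (I4 ∪ IH G H xb) xb

/-- MPSC-WCR. -/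
def WCR (g : Fin m → Vec n → ℝ) (h : Fin p → Vec n → ℝ)
    (G H : Fin l → Vec n → ℝ) (xb : Vec n) : Prop :=
  ∃ ε > (0:ℝ), ∀ x : Vec n, ‖x - xb‖ < ε →
    gradRank g h G H (Ig g xb) (IG G H xb ∪ IGH G H xb) (IH G H xb ∪ IGH G H xb) x =
    gradRank g h G H (Ig g xb) (IG G H xb ∪ IGH G H xb) (IH G H xb ∪ IGH G H xb) xb

/-- MPSC-PWCR. -/
def PWCR (g : Fin m → Vec n → ℝ) (h : Fin p → Vec n → ℝ)
    (G H : Fin l → Vec n → ℝ) (xb : Vec n) : Prop :=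
  ∀ β1 β2 : Set (Fin l), Partition G H xb β1 β2 →
    ∃ ε > (0:ℝ), ∀ x : Vec n, ‖x - xb‖ < ε →
      gradRank g h G H (Ig g xb) (IG G H xb ∪ β1) (IH G H xb ∪ β2) x =
      gradRank g h G H (Ig g xb) (IG G H xb ∪ β1) (IH G H xb ∪ β2) xb

/-- The index set I_g^- associated with a branch (β1, β2). -/
def IgMinus (g : Fin m → Vec n → ℝ) (h : Fin p → Vec n → ℝ)
    (G H : Fin l → Vec n → ℝ) (xb : Vec n) (β1 β2 : Set (Fin l)) : Set (Fin m) :=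
  {i | i ∈ Ig g xb ∧ ∃ (lam : Fin m → ℝ) (ρ : Fin p → ℝ) (μ ν : Fin l → ℝ),
    (∀ i', 0 ≤ lam i') ∧ (∀ i', i' ∉ Ig g xb \ {i} → lam i' = 0) ∧
    (∀ k, k ∉ IG G H xb ∪ β1 → μ k = 0) ∧ (∀ k, k ∉ IH G H xb ∪ β2 → ν k = 0) ∧
    -gradient (g i) xb = ∑ i', lam i' • gradient (g i') xb + ∑ j, ρ j • gradient (h j) xb +
      ∑ k, μ k • gradient (G k) xb + ∑ k, ν k • gradient (H k) xb}

/-- MPSC-PCRSC. -/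
def PCRSC (g : Fin m → Vec n → ℝ) (h : Fin p → Vec n → ℝ)
    (G H : Fin l → Vec n → ℝ) (xb : Vec n) : Prop :=
  ∀ β1 β2 : Set (Fin l), Partition G H xb β1 β2 →
    ∃ ε > (0:ℝ), ∀ x : Vec n, ‖x - xb‖ < ε →
      gradRank g h G H (IgMinus g h G H xb β1 β2) (IG G H xb ∪ β1) (IH G H xb ∪ β2) x =
      gradRank g h G H (IgMinus g h G H xb β1 β2) (IG G H xb ∪ β1) (IH G H xb ∪ β2) xb

/-- A twice differentiable arc on [0, δ) (one-sided at the endpoint 0),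
with first derivative ξ'. -/
def TwiceDiffArc (δ : ℝ) (ξ ξ' : ℝ → Vec n) : Prop :=
  (∀ t ∈ Ico (0:ℝ) δ, HasDerivWithinAt ξ (ξ' t) (Ico (0:ℝ) δ) t) ∧
  ∀ t ∈ Ico (0:ℝ) δ, DifferentiableWithinAt ℝ ξ' (Ico (0:ℝ) δ) t

/-- MPSC-SSOCQ. -/
def SSOCQ (g : Fin m → Vec n → ℝ) (h : Fin p → Vec n → ℝ)
    (G H : Fin l → Vec n → ℝ) (xb : Vec n) : Prop :=
  ∀ d ∈ LCone g h G H xb, d ≠ 0 →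
    ∃ δ > (0:ℝ), ∃ J K : Set (Fin l), J ⊆ IGH G H xb ∧ K ⊆ IGH G H xb ∧
      ∃ ξ ξ' : ℝ → Vec n, TwiceDiffArc δ ξ ξ' ∧
        (∀ t ∈ Ico (0:ℝ) δ, ξ t ∈ Feas g h G H) ∧
        ξ 0 = xb ∧ ξ' 0 = d ∧
        (∀ t ∈ Ico (0:ℝ) δ, ∀ i ∈ Ig g xb, fderiv ℝ (g i) xb d = 0 → g i (ξ t) = 0) ∧
        (∀ t ∈ Ico (0:ℝ) δ, ∀ k ∈ IG G H xb ∪ J, G k (ξ t) = 0) ∧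
        ∀ t ∈ Ico (0:ℝ) δ, ∀ k ∈ IH G H xb ∪ K, H k (ξ t) = 0

/-- MPSC-WSOCQ. -/
def WSOCQ (g : Fin m → Vec n → ℝ) (h : Fin p → Vec n → ℝ)
    (G H : Fin l → Vec n → ℝ) (xb : Vec n) : Prop :=
  ∀ d ∈ CritSubspace g h G H xb, d ≠ 0 →
    ∃ δ > (0:ℝ), ∃ J K : Set (Fin l), J ⊆ IGH G H xb ∧ K ⊆ IGH G H xb ∧
      ∃ ζ ζ' : ℝ → Vec n, TwiceDiffArc δ ζ ζ' ∧
        (∀ t ∈ Ico (0:ℝ) δ, ζ t ∈ Feas g h G H) ∧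
        ζ 0 = xb ∧ ζ' 0 = d ∧
        (∀ t ∈ Ico (0:ℝ) δ, ∀ i ∈ Ig g xb, g i (ζ t) = 0) ∧
        (∀ t ∈ Ico (0:ℝ) δ, ∀ k ∈ IG G H xb ∪ J, G k (ζ t) = 0) ∧
        ∀ t ∈ Ico (0:ℝ) δ, ∀ k ∈ IH G H xb ∪ K, H k (ζ t) = 0

/-- The S-stationarity system for multipliers (λ, ρ, μ, ν) at xb. -/
def SStationarySystem (f : Vec n → ℝ) (g : Fin m → Vec n → ℝ) (h : Fin p → Vec n → ℝ)
    (G H : Fin l → Vec n → ℝ) (xb : Vec n)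
    (lam : Fin m → ℝ) (ρ : Fin p → ℝ) (μ ν : Fin l → ℝ) : Prop :=
  (∀ i, 0 ≤ lam i) ∧ (∀ i, lam i * g i xb = 0) ∧
  (∀ k ∈ IH G H xb ∪ IGH G H xb, μ k = 0) ∧
  (∀ k ∈ IG G H xb ∪ IGH G H xb, ν k = 0) ∧
  gradient f xb + ∑ i, lam i • gradient (g i) xb + ∑ j, ρ j • gradient (h j) xb +
    ∑ k, μ k • gradient (G k) xb + ∑ k, ν k • gradient (H k) xb = 0

def SStationary (f : Vec n → ℝ) (g : Fin m → Vec n → ℝ) (h : Fin p → Vec n → ℝ)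
    (G H : Fin l → Vec n → ℝ) (xb : Vec n) : Prop :=
  ∃ (lam : Fin m → ℝ) (ρ : Fin p → ℝ) (μ ν : Fin l → ℝ),
    SStationarySystem f g h G H xb lam ρ μ ν

/-- The M-stationarity system for multipliers (λ, ρ, μ, ν) at xb. -/
def MStationarySystem (f : Vec n → ℝ) (g : Fin m → Vec n → ℝ) (h : Fin p → Vec n → ℝ)
    (G H : Fin l → Vec n → ℝ) (xb : Vec n)
    (lam : Fin m → ℝ) (ρ : Fin p → ℝ) (μ ν : Fin l → ℝ) : Prop :=
  (∀ i, 0 ≤ lam i) ∧ (∀ i, lam i * g i xb = 0) ∧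
  (∀ k ∈ IH G H xb, μ k = 0) ∧ (∀ k ∈ IG G H xb, ν k = 0) ∧
  (∀ k ∈ IGH G H xb, μ k * ν k = 0) ∧
  gradient f xb + ∑ i, lam i • gradient (g i) xb + ∑ j, ρ j • gradient (h j) xb +
    ∑ k, μ k • gradient (G k) xb + ∑ k, ν k • gradient (H k) xb = 0

def MStationary (f : Vec n → ℝ) (g : Fin m → Vec n → ℝ) (h : Fin p → Vec n → ℝ)
    (G H : Fin l → Vec n → ℝ) (xb : Vec n) : Prop :=
  ∃ (lam : Fin m → ℝ) (ρ : Fin p → ℝ) (μ ν : Fin l → ℝ),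
    MStationarySystem f g h G H xb lam ρ μ ν

/-- Local optimality for (MPSC). -/
def LocallyOptimal (f : Vec n → ℝ) (g : Fin m → Vec n → ℝ) (h : Fin p → Vec n → ℝ)
    (G H : Fin l → Vec n → ℝ) (xb : Vec n) : Prop :=
  xb ∈ Feas g h G H ∧ ∃ ε > (0:ℝ), ∀ x ∈ Feas g h G H, ‖x - xb‖ < ε → f xb ≤ f x

/-- Hessian quadratic form dᵀ∇²φ(x)d. -/
def hessForm (φ : Vec n → ℝ) (x d : Vec n) : ℝ :=
  iteratedFDeriv ℝ 2 φ x ![d, d]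

/-- The Lagrange function ℓ. -/
def lagr (f : Vec n → ℝ) (g : Fin m → Vec n → ℝ) (h : Fin p → Vec n → ℝ)
    (G H : Fin l → Vec n → ℝ)
    (lam : Fin m → ℝ) (ρ : Fin p → ℝ) (μ ν : Fin l → ℝ) : Vec n → ℝ :=
  fun x => f x + ∑ i, lam i * g i x + ∑ j, ρ j * h j x +
    ∑ k, μ k * G k x + ∑ k, ν k * H k x

/-- Constraint-violation residual. -/
def residual (g : Fin m → Vec n → ℝ) (h : Fin p → Vec n → ℝ)
    (G H : Fin l → Vec n → ℝ) (x : Vec n) : ℝ :=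
  Real.sqrt (∑ i, max (g i x) 0 ^ 2 + ∑ j, h j x ^ 2 + ∑ k, min (G k x ^ 2) (H k x ^ 2))

/-- Penalty function P_κ. -/
def Pen (f : Vec n → ℝ) (g : Fin m → Vec n → ℝ) (h : Fin p → Vec n → ℝ)
    (G H : Fin l → Vec n → ℝ) (κ : ℝ) (x : Vec n) : ℝ :=
  f x + κ * residual g h G H x

/-- MPSC piecewise second-order quasi-normality. -/
def PSOQN (g : Fin m → Vec n → ℝ) (h : Fin p → Vec n → ℝ)
    (G H : Fin l → Vec n → ℝ) (xb : Vec n) : Prop :=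
  ∀ β1 β2 : Set (Fin l), Partition G H xb β1 β2 →
    ¬ ∃ (lam : Fin m → ℝ) (ρ : Fin p → ℝ) (μ ν : Fin l → ℝ),
      (∀ i, 0 ≤ lam i) ∧
      (∀ k, k ∉ IG G H xb ∪ β1 → μ k = 0) ∧ (∀ k, k ∉ IH G H xb ∪ β2 → ν k = 0) ∧
      ¬(lam = 0 ∧ ρ = 0 ∧ μ = 0 ∧ ν = 0) ∧
      (∑ i, lam i • gradient (g i) xb + ∑ j, ρ j • gradient (h j) xb +
        ∑ k, μ k • gradient (G k) xb + ∑ k, ν k • gradient (H k) xb = 0) ∧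
      (∀ d : Vec n, (∀ i ∈ Ig g xb, fderiv ℝ (g i) xb d = 0) →
        (∀ j, fderiv ℝ (h j) xb d = 0) →
        (∀ k ∈ IG G H xb ∪ β1, fderiv ℝ (G k) xb d = 0) →
        (∀ k ∈ IH G H xb ∪ β2, fderiv ℝ (H k) xb d = 0) →
        0 ≤ ∑ i, lam i * hessForm (g i) xb d + ∑ j, ρ j * hessForm (h j) xb d +
          ∑ k, μ k * hessForm (G k) xb d + ∑ k, ν k * hessForm (H k) xb d) ∧
      ∃ xs : ℕ → Vec n, Tendsto xs atTop (nhds xb) ∧ ∀ s,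
        (∀ i, 0 < lam i → 0 < lam i * g i (xs s)) ∧
        (∀ j, ρ j ≠ 0 → 0 < ρ j * h j (xs s)) ∧
        (∀ k, μ k ≠ 0 → 0 < μ k * G k (xs s)) ∧
        (∀ k, ν k ≠ 0 → 0 < ν k * H k (xs s))

set_option maxHeartbeats 1000000 in
theorem wcr_implies_wsocq {n m p l : ℕ} (f : Vec n → ℝ) (g : Fin m → Vec n → ℝ)
    (h : Fin p → Vec n → ℝ) (G H : Fin l → Vec n → ℝ)
    (hf : ContDiff ℝ 2 f) (hg : ∀ i, ContDiff ℝ 2 (g i)) (hh : ∀ j, ContDiff ℝ 2 (h j))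
    (hG : ∀ k, ContDiff ℝ 2 (G k)) (hH : ∀ k, ContDiff ℝ 2 (H k))
    (xb : Vec n) (hxb : xb ∈ Feas g h G H)
    (hcq : WCR g h G H xb) : WSOCQ g h G H xb := by
  classical
  intro d hdcrit _hdne
  obtain ⟨hgf, hhf, hGHf⟩ := hxb
  obtain ⟨ε, hε, hrank⟩ := hcq
  haveI : Fintype ↥(Ig g xb) := Fintype.ofFinite _
  haveI : Fintype ↥(IG G H xb ∪ IGH G H xb) := Fintype.ofFinite _
  haveI : Fintype ↥(IH G H xb ∪ IGH G H xb) := Fintype.ofFinite _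
  set ι : Type := (↥(Ig g xb) ⊕ Fin p) ⊕
    (↥(IG G H xb ∪ IGH G H xb) ⊕ ↥(IH G H xb ∪ IGH G H xb)) with hι
  set c : ι → Vec n → ℝ := Sum.elim (Sum.elim (fun i => g i.1) h)
    (Sum.elim (fun k => G k.1) (fun k => H k.1)) with hcdef
  have hcC : ∀ i, ContDiff ℝ 2 (c i) := by
    rintro ((i | j) | (k | k))
    · exact hg i.1
    · exact hh j
    · exact hG k.1
    · exact hH k.1
  have hc0 : ∀ i, c i xb = 0 := by
    rintro ((i | j) | (k | k))
    · exact i.2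
    · exact hhf j
    · rcases k.2 with hk | hk
      · exact hk.1
      · exact hk.1
    · rcases k.2 with hk | hk
      · exact hk.2
      · exact hk.2
  have hset : ∀ x : Vec n,
      ((fun i => gradient (g i) x) '' (Ig g xb) ∪ Set.range (fun j => gradient (h j) x) ∪
        (fun k => gradient (G k) x) '' (IG G H xb ∪ IGH G H xb) ∪
        (fun k => gradient (H k) x) '' (IH G H xb ∪ IGH G H xb)) =
      range (fun i : ι => gradient (c i) x) := by
    intro x
    ext y
    constructor
    · rintro (((⟨i, hi, rfl⟩ | ⟨j, rfl⟩) | ⟨k, hk, rfl⟩) | ⟨k, hk, rfl⟩)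
      · exact ⟨Sum.inl (Sum.inl ⟨i, hi⟩), rfl⟩
      · exact ⟨Sum.inl (Sum.inr j), rfl⟩
      · exact ⟨Sum.inr (Sum.inl ⟨k, hk⟩), rfl⟩
      · exact ⟨Sum.inr (Sum.inr ⟨k, hk⟩), rfl⟩
    · rintro ⟨((i | j) | (k | k)), rfl⟩
      · exact Or.inl (Or.inl (Or.inl ⟨i.1, i.2, rfl⟩))
      · exact Or.inl (Or.inl (Or.inr ⟨j, rfl⟩))
      · exact Or.inl (Or.inr ⟨k.1, k.2, rfl⟩)
      · exact Or.inr ⟨k.1, k.2, rfl⟩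
  have hrank' : ∀ x : Vec n, ‖x - xb‖ < ε →
      Module.finrank ℝ ↥(Submodule.span ℝ (range fun i : ι => gradient (c i) x)) =
        Module.finrank ℝ ↥(Submodule.span ℝ (range fun i : ι => gradient (c i) xb)) := by
    intro x hx
    have h0 := hrank x hx
    unfold gradRank at h0
    rw [hset x, hset xb] at h0
    exact h0
  have hd : ∀ i, fderiv ℝ (c i) xb d = 0 := by
    obtain ⟨h1, h2, h3, h4⟩ := hdcrit
    rintro ((i | j) | (k | k))
    · exact h1 i.1 i.2
    · exact h2 j
    · exact h3 k.1 k.2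
    · exact h4 k.1 k.2
  -- inactive inequality constraints stay negative nearby
  have hO : IsOpen {x : Vec n | ∀ i ∉ Ig g xb, g i x < 0} := by
    have heq : {x : Vec n | ∀ i ∉ Ig g xb, g i x < 0} =
        ⋂ i ∈ {i : Fin m | i ∉ Ig g xb}, {x | g i x < 0} := by
      ext x; simp
    rw [heq]
    exact (Set.toFinite _).isOpen_biInter fun i _ =>
      isOpen_lt (hg i).continuous continuous_const
  have hxbO : xb ∈ {x : Vec n | ∀ i ∉ Ig g xb, g i x < 0} :=
    fun i hi => lt_of_le_of_ne (hgf i) hi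
  obtain ⟨ε', hε', hballO⟩ := Metric.isOpen_iff.1 hO xb hxbO
  obtain ⟨δ, hδ, ζ, ζ', harc1, harc2, hζ0, hζ'0, hmain⟩ :=
    core c hcC xb hc0 hε hrank' d hd hε'
  have hO' : ∀ t ∈ Ico (0:ℝ) δ, ∀ i ∉ Ig g xb, g i (ζ t) < 0 := by
    intro t ht
    exact hballO (by rw [mem_ball, dist_eq_norm]; exact (hmain t ht).2)
  refine ⟨δ, hδ, IGH G H xb, IGH G H xb, subset_rfl, subset_rfl, ζ, ζ',
    ⟨harc1, harc2⟩, ?_, hζ0, hζ'0, ?_, ?_, ?_⟩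
  · -- feasibility
    intro t ht
    have hiz := (hmain t ht).1
    refine ⟨?_, ?_, ?_⟩
    · intro i
      by_cases hi : i ∈ Ig g xb
      · exact le_of_eq (hiz (Sum.inl (Sum.inl ⟨i, hi⟩)))
      · exact le_of_lt (hO' t ht i hi)
    · intro j
      exact hiz (Sum.inl (Sum.inr j))
    · intro k
      by_cases hk : G k xb = 0
      · by_cases hk2 : H k xb = 0
        · have hz : G k (ζ t) = 0 := hiz (Sum.inr (Sum.inl ⟨k, Or.inr ⟨hk, hk2⟩⟩))
          rw [hz, zero_mul]
        · have hz : G k (ζ t) = 0 := hiz (Sum.inr (Sum.inl ⟨k, Or.inl ⟨hk, hk2⟩⟩))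
          rw [hz, zero_mul]
      · have hk2 : H k xb = 0 := by
          rcases mul_eq_zero.1 (hGHf k) with hx | hx
          · exact absurd hx hk
          · exact hx
        have hz : H k (ζ t) = 0 := hiz (Sum.inr (Sum.inr ⟨k, Or.inl ⟨hk, hk2⟩⟩))
        rw [hz, mul_zero]
  · intro t ht i hi
    exact ((hmain t ht).1) (Sum.inl (Sum.inl ⟨i, hi⟩))
  · intro t ht k hk
    exact ((hmain t ht).1) (Sum.inr (Sum.inl ⟨k, hk⟩))
  · intro t ht k hk
    exact ((hmain t ht).1) (Sum.inr (Sum.inr ⟨k, hk⟩))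

end MPSC
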